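/- With f = (1, b_1+1, (b_1+1)(b_2+1), ..., ∏_{i=1}^{m-1}(b_i+1)), the vector b is a vertex (extreme point) of the convex hull of the set {t ∈ Z_{≥0}^m : f·t = f·b}. -/

import Mathlib

open Finset

/-- If `x ∈ S` uniquely maximizes a linear functional over `S`, then `x` is an
extreme point of `convexHull ℝ S`. -/
private lemma extreme_of_unique_max {E : Type*} [AddCommGroup E] [Module ℝ E]
    (S : Set E) (ℓ : E →ₗ[ℝ] ℝ) (x : E) (hx : x ∈ S)
    (hmax : ∀ y ∈ S, ℓ y ≤ ℓ x) (huniq : ∀ y ∈ S, ℓ y = ℓ x → y = x) :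
    x ∈ (convexHull ℝ S).extremePoints ℝ := by
  have hhull : convexHull ℝ S ⊆ {y | ℓ y ≤ ℓ x} := by
    have hconv : Convex ℝ {y | ℓ y ≤ ℓ x} := by
      have := (convex_Iic (ℓ x)).linear_preimage ℓ
      simpa [Set.preimage, Set.Iic] using this
    exact convexHull_min hmax hconv
  have key : ∀ y ∈ convexHull ℝ S, ℓ y = ℓ x → y = x := by
    intro y hy hℓy
    rw [_root_.convexHull_eq] at hy
    obtain ⟨ι, t, w, z, hw0, hw1, hzS, hc⟩ := hy
    rw [Finset.centerMass_eq_of_sum_1 _ _ hw1] at hc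
    have hly : ∑ i ∈ t, w i * ℓ (z i) = ℓ x := by
      rw [← hℓy, ← hc, map_sum]
      simp [smul_eq_mul]
    have hle : ∀ i ∈ t, w i * ℓ (z i) ≤ w i * ℓ x := fun i hi =>
      mul_le_mul_of_nonneg_left (hmax _ (hzS i hi)) (hw0 i hi)
    have hsum2 : ∑ i ∈ t, w i * ℓ (z i) = ∑ i ∈ t, w i * ℓ x := by
      rw [hly, ← Finset.sum_mul, hw1, one_mul]
    have heach := (Finset.sum_eq_sum_iff_of_le hle).mp hsum2
    have hz : ∀ i ∈ t, w i • z i = w i • x := by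
      intro i hi
      rcases eq_or_ne (w i) 0 with h0 | h0
      · simp [h0]
      · have : ℓ (z i) = ℓ x := by
          have := heach i hi
          exact mul_left_cancel₀ h0 this
        rw [huniq _ (hzS i hi) this]
    rw [← hc, Finset.sum_congr rfl hz, ← Finset.sum_smul, hw1, one_smul]
  refine mem_extremePoints.2 ⟨subset_convexHull ℝ S hx, ?_⟩
  rintro x₁ hx₁ x₂ hx₂ hseg
  obtain ⟨a, c, ha, hc, hac, hsum⟩ := hseg
  have h1 : ℓ x₁ ≤ ℓ x := hhull hx₁
  have h2 : ℓ x₂ ≤ ℓ x := hhull hx₂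
  have hx' : a * ℓ x₁ + c * ℓ x₂ = ℓ x := by
    rw [← hsum]; simp [smul_eq_mul]
  have e1 : a * ℓ x₁ ≤ a * ℓ x := mul_le_mul_of_nonneg_left h1 ha.le
  have e2 : c * ℓ x₂ ≤ c * ℓ x := mul_le_mul_of_nonneg_left h2 hc.le
  have e3 : a * ℓ x + c * ℓ x = ℓ x := by rw [← add_mul, hac, one_mul]
  have hℓ1 : ℓ x₁ = ℓ x := mul_left_cancel₀ ha.ne' (by linarith)
  have hℓ2 : ℓ x₂ = ℓ x := mul_left_cancel₀ hc.ne' (by linarith)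
  exact ⟨key _ hx₁ hℓ1, key _ hx₂ hℓ2⟩

/-- The key integer lemma: `b` uniquely maximizes `∑ (j+1) f_j t_j` over nonnegative
integer solutions of `f·t = f·b`. -/
private lemma int_key (m : ℕ) (b : Fin m → ℤ) (hb : ∀ i, 0 ≤ b i)
    (f : Fin m → ℤ) (hf : ∀ j, f j = ∏ i ∈ Finset.Iio j, (b i + 1))
    (t : Fin m → ℤ) (ht0 : ∀ i, 0 ≤ t i) (htf : ∑ i, f i * t i = ∑ i, f i * b i) :
    (∑ j, ((j.val : ℤ) + 1) * (f j * t j) ≤ ∑ j, ((j.val : ℤ) + 1) * (f j * b j)) ∧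
      ((∑ j, ((j.val : ℤ) + 1) * (f j * t j) = ∑ j, ((j.val : ℤ) + 1) * (f j * b j)) → t = b) := by
  have hpos : ∀ j, 0 < f j := by
    intro j
    rw [hf]
    exact Finset.prod_pos fun i _ => by have := hb i; omega
  have hdvd : ∀ k j : Fin m, k ≤ j → f k ∣ f j := by
    intro k j hkj
    rw [hf j, hf k, ← Finset.prod_sdiff (Finset.Iio_subset_Iio hkj)]
    exact Dvd.intro_left _ rfl
  -- the auxiliary ℕ-indexed sequence
  set b' : ℕ → ℤ := fun n => if h : n < m then b ⟨n, h⟩ else 0 with hb'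
  set F : ℕ → ℤ := fun n => ∏ i ∈ Finset.range n, (b' i + 1) with hF
  have hfF : ∀ k : Fin m, f k = F (k : ℕ) := by
    intro k
    show f k = ∏ i ∈ Finset.range (k : ℕ), (b' i + 1)
    rw [hf, ← Nat.Iio_eq_range, ← Fin.map_valEmbedding_Iio, Finset.prod_map]
    refine Finset.prod_congr rfl fun i _ => ?_
    simp [hb', Fin.valEmbedding_apply, i.isLt]
  -- telescoping: the sum of `f j * b j` over `Iio k` is `f k - 1`
  have htel : ∀ k : Fin m, ∑ j ∈ Finset.Iio k, f j * b j = f k - 1 := by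
    intro k
    have h1 : ∑ j ∈ Finset.Iio k, f j * b j = ∑ n ∈ Finset.range (k : ℕ), F n * b' n := by
      rw [← Nat.Iio_eq_range, ← Fin.map_valEmbedding_Iio, Finset.sum_map]
      refine Finset.sum_congr rfl fun i _ => ?_
      simp [hb', Fin.valEmbedding_apply, i.isLt, ← hfF]
    have h2 : ∀ n : ℕ, F n * b' n = F (n + 1) - F n := by
      intro n
      rw [hF]
      simp only [Finset.prod_range_succ]
      ring
    rw [h1, Finset.sum_congr rfl fun n _ => h2 n, Finset.sum_range_sub, hfF]
    simp [hF]
  -- splitting a sum over `univ` at `k`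
  have hsplit : ∀ (k : Fin m) (g : Fin m → ℤ),
      ∑ j, g j = ∑ j ∈ Finset.Iio k, g j + ∑ j ∈ Finset.Ici k, g j := by
    intro k g
    rw [← Finset.sum_union]
    · congr 1
      ext j
      simp only [Finset.mem_union, Finset.mem_Iio, Finset.mem_Ici, Finset.mem_univ, true_iff]
      exact lt_or_ge j k
    · rw [Finset.disjoint_left]
      intro j hj hj'
      exact absurd (Finset.mem_Ici.mp hj') (not_le.mpr (Finset.mem_Iio.mp hj))
  -- the partial-sum inequalities
  have hS : ∀ k : Fin m, ∑ j ∈ Finset.Ici k, f j * t j ≤ ∑ j ∈ Finset.Ici k, f j * b j := by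
    intro k
    set A := ∑ j ∈ Finset.Ici k, f j * t j with hA
    set B := ∑ j ∈ Finset.Ici k, f j * b j with hB
    have hAtot : A ≤ ∑ j, f j * t j := by
      refine Finset.sum_le_sum_of_subset_of_nonneg (Finset.subset_univ _) fun j _ _ => ?_
      exact mul_nonneg (hpos j).le (ht0 j)
    have hbtot : ∑ j, f j * b j = (f k - 1) + B := by
      rw [hsplit k, htel k]
    have hAB : A ≤ B + (f k - 1) := by
      rw [htf, hbtot] at hAtot; linarith
    have hdA : f k ∣ A := Finset.dvd_sum fun j hj =>
      Dvd.dvd.mul_right (hdvd k j (Finset.mem_Ici.mp hj)) _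
    have hdB : f k ∣ B := Finset.dvd_sum fun j hj =>
      Dvd.dvd.mul_right (hdvd k j (Finset.mem_Ici.mp hj)) _
    by_contra hlt
    push_neg at hlt
    have hd : f k ∣ A - B := dvd_sub hdA hdB
    have hpos' : 0 < A - B := by linarith
    have := Int.le_of_dvd hpos' hd
    linarith [hpos k]
  -- the weighted-sum identity
  have hid : ∀ g : Fin m → ℤ,
      ∑ k : Fin m, ∑ j ∈ Finset.Ici k, g j = ∑ j, ((j.val : ℤ) + 1) * g j := by
    intro g
    have h1 : ∀ k : Fin m, ∑ j ∈ Finset.Ici k, g j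
        = ∑ j : Fin m, if k ≤ j then g j else 0 := by
      intro k
      rw [← Fintype.sum_ite_mem]
      exact Finset.sum_congr rfl fun j _ => by simp [Finset.mem_Ici]
    rw [Finset.sum_congr rfl fun k _ => h1 k, Finset.sum_comm]
    refine Finset.sum_congr rfl fun j _ => ?_
    have h2 : ∀ k : Fin m, (if k ≤ j then g j else 0) = if k ∈ Finset.Iic j then g j else 0 := by
      intro k; simp [Finset.mem_Iic]
    rw [Finset.sum_congr rfl fun k _ => h2 k, Fintype.sum_ite_mem,
      Finset.sum_const, Fin.card_Iic]
    push_cast [nsmul_eq_mul]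
    ring
  constructor
  · rw [← hid, ← hid]
    exact Finset.sum_le_sum fun k _ => hS k
  · intro heq
    rw [← hid, ← hid] at heq
    have heach := (Finset.sum_eq_sum_iff_of_le fun k _ => hS k).mp heq
    have hSk : ∀ k : Fin m, ∑ j ∈ Finset.Ici k, f j * t j = ∑ j ∈ Finset.Ici k, f j * b j :=
      fun k => heach k (Finset.mem_univ k)
    -- downward induction
    have hback : ∀ n : ℕ, ∀ j : Fin m, m - (j : ℕ) ≤ n → t j = b j := by
      intro n
      induction n with
      | zero => intro j hj; exact absurd hj (by have := j.isLt; omega)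
      | succ n ih =>
        intro j hj
        have hIoi : ∀ i ∈ Finset.Ioi j, f i * t i = f i * b i := by
          intro i hi
          have hji : j < i := Finset.mem_Ioi.mp hi
          have : (j : ℕ) < (i : ℕ) := hji
          rw [ih i (by have := i.isLt; omega)]
        have hS' := hSk j
        rw [← Finset.Ioi_insert j, Finset.sum_insert Finset.notMem_Ioi_self,
          Finset.sum_insert Finset.notMem_Ioi_self,
          Finset.sum_congr rfl hIoi] at hS'
        have : f j * t j = f j * b j := by linarith
        exact mul_left_cancel₀ (hpos j).ne' this
    funext j
    exact hback (m - (j : ℕ)) j le_rfl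

/-- Lemma 1: `b` is an extreme point of the convex hull of
`M(f, f·b) = {t ∈ ℤ^m_{≥0} : f·t = f·b}`, viewed in `ℝ^m`. -/
theorem stmt1 (m : ℕ) (b : Fin m → ℤ) (hb : ∀ i, 0 ≤ b i)
    (f : Fin m → ℤ) (hf : ∀ j, f j = ∏ i ∈ Finset.Iio j, (b i + 1))
    (M : Set (Fin m → ℝ))
    (hM : M = {x : Fin m → ℝ | (∀ i, ∃ k : ℤ, 0 ≤ k ∧ x i = (k : ℝ)) ∧
        ∑ i, (f i : ℝ) * x i = ∑ i, (f i : ℝ) * (b i : ℝ)}) :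
    (fun i => (b i : ℝ)) ∈ (convexHull ℝ M).extremePoints ℝ := by
  -- the certifying linear functional
  set c : Fin m → ℝ := fun j => ((j.val : ℝ) + 1) * (f j : ℝ) with hc
  set ℓ : (Fin m → ℝ) →ₗ[ℝ] ℝ :=
    { toFun := fun y => ∑ j, c j * y j
      map_add' := by
        intro y z
        simp [mul_add, Finset.sum_add_distrib]
      map_smul' := by
        intro a y
        simp [Finset.mul_sum, smul_eq_mul]
        exact Finset.sum_congr rfl fun j _ => by ring } with hℓ
  set x : Fin m → ℝ := fun i => (b i : ℝ) with hx
  -- describe points of M via integer vectors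
  have hMint : ∀ y ∈ M, ∃ t : Fin m → ℤ, (∀ i, 0 ≤ t i) ∧ (∀ i, y i = (t i : ℝ)) ∧
      ∑ i, f i * t i = ∑ i, f i * b i := by
    intro y hy
    rw [hM] at hy
    obtain ⟨hint, heq⟩ := hy
    choose t ht0 hti using hint
    refine ⟨t, ht0, hti, ?_⟩
    have : ∑ i, (f i : ℝ) * (t i : ℝ) = ∑ i, (f i : ℝ) * (b i : ℝ) := by
      rw [← heq]
      exact Finset.sum_congr rfl fun i _ => by rw [hti i]
    exact_mod_cast this
  have hℓcast : ∀ t : Fin m → ℤ,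
      ℓ (fun i => (t i : ℝ)) = ((∑ j, ((j.val : ℤ) + 1) * (f j * t j) : ℤ) : ℝ) := by
    intro t
    simp only [hℓ, LinearMap.coe_mk, AddHom.coe_mk, hc]
    push_cast
    exact Finset.sum_congr rfl fun j _ => by ring
  have hxM : x ∈ M := by
    rw [hM]
    exact ⟨fun i => ⟨b i, hb i, rfl⟩, rfl⟩
  have hmax : ∀ y ∈ M, ℓ y ≤ ℓ x := by
    intro y hy
    obtain ⟨t, ht0, hti, htf⟩ := hMint y hy
    have hyt : y = fun i => (t i : ℝ) := funext hti
    rw [hyt, hx, hℓcast, hℓcast]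
    exact_mod_cast (int_key m b hb f hf t ht0 htf).1
  have huniq : ∀ y ∈ M, ℓ y = ℓ x → y = x := by
    intro y hy hℓy
    obtain ⟨t, ht0, hti, htf⟩ := hMint y hy
    have hyt : y = fun i => (t i : ℝ) := funext hti
    rw [hyt, hx, hℓcast, hℓcast] at hℓy
    have : (∑ j, ((j.val : ℤ) + 1) * (f j * t j)) = ∑ j, ((j.val : ℤ) + 1) * (f j * b j) := by
      exact_mod_cast hℓy
    have htb := (int_key m b hb f hf t ht0 htf).2 this
    rw [hyt, htb, hx]
  exact extreme_of_unique_max M ℓ x hxM hmax huniq
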